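/- Define rational numbers D_{i,k} for even k ≥ 4 and d_{i,k} for even k ≥ 2 by D_{i,k} = (1/2)^{i+1} e_i(1, 3, ..., k-3) and d_{i,k} = (1/2)^{i+1} e_i(2, 4, ..., k-2). Then for every even k ≥ 6 and i ≥ 1 with i ≤ k-3, the recursion D_{i,k} = 2 ∑_{j odd, 1 ≤ j ≤ k-3} C(k-3, j) ∑_{ℓ=0}^{i} (-1)^ℓ d_{i-ℓ, k-1-j} d_{ℓ, j+1} − 2 ∑_{j even, 2 ≤ j ≤ k-3} C(k-3, j) ∑_{ℓ=0}^{i} (-1)^ℓ D_{i-ℓ, k-j} D_{ℓ, j+2} holds. -/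

import Mathlib

/-- `e_i(1, 3, ..., k-3)`, the `i`-th elementary symmetric function of the
odd integers from `1` to `k - 3` (there are `(k-2)/2` of them). -/
def eOdd (i k : ℕ) : ℚ :=
  ∑ s ∈ Finset.powersetCard i (Finset.range ((k - 2) / 2)), ∏ n ∈ s, (2 * (n : ℚ) + 1)

/-- `e_i(2, 4, ..., k-2)`, the `i`-th elementary symmetric function of the
even integers from `2` to `k - 2` (there are `(k-2)/2` of them). -/
def eEven (i k : ℕ) : ℚ :=
  ∑ s ∈ Finset.powersetCard i (Finset.range ((k - 2) / 2)), ∏ n ∈ s, (2 * ((n : ℚ) + 1))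

/-- `D_{i,k} = (1/2)^(i+1) e_i(1, 3, ..., k-3)`. -/
def Dint (i k : ℕ) : ℚ := (1 / 2) ^ (i + 1) * eOdd i k

/-- `d_{i,k} = (1/2)^(i+1) e_i(2, 4, ..., k-2)`. -/
def dint (i k : ℕ) : ℚ := (1 / 2) ^ (i + 1) * eEven i k

open Finset Polynomial

lemma sum_range_two_mul {M : Type*} [AddCommMonoid M] (m : ℕ) (g : ℕ → M) :
    ∑ j ∈ range (2 * m), g j = ∑ b ∈ range m, (g (2 * b) + g (2 * b + 1)) := by
  induction m with
  | zero => simp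
  | succ m ih =>
      have h : 2 * (m + 1) = 2 * m + 1 + 1 := by ring
      rw [h, sum_range_succ, sum_range_succ, ih, sum_range_succ, add_assoc]

lemma mono_alt {R : Type*} [CommRing R] :
    ∀ d N : ℕ, d < N →
      ∑ j ∈ range (N + 1), (-1 : R) ^ j * (N.choose j : R) * (j : R) ^ d = 0 := by
  intro d
  induction d using Nat.strong_induction_on with
  | _ d ih =>
    intro N hdN
    match d with
    | 0 =>
        have h0 := Int.alternating_sum_range_choose_of_ne (n := N) (by omega)
        calc ∑ j ∈ range (N + 1), (-1 : R) ^ j * (N.choose j : R) * (j : R) ^ 0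
            = ((∑ j ∈ range (N + 1), (-1 : ℤ) ^ j * (N.choose j : ℤ) : ℤ) : R) := by
              push_cast
              exact Finset.sum_congr rfl fun j _ => by ring
          _ = 0 := by rw [h0]; simp
    | d + 1 =>
        obtain ⟨M, rfl⟩ : ∃ M, N = M + 1 := ⟨N - 1, by omega⟩
        rw [Finset.sum_range_succ' _ (M + 1)]
        simp only [Nat.cast_zero, Nat.choose_zero_right]
        rw [zero_pow (by omega)]
        have key : ∀ j : ℕ, ((M + 1).choose (j + 1) : R) * ((j : R) + 1) =
            (M + 1 : R) * (M.choose j : R) := by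
          intro j
          have h := Nat.add_one_mul_choose_eq M j
          have h2 := congrArg (fun z : ℕ => (z : R)) h
          push_cast at h2
          exact h2.symm
        have step : ∀ j ∈ range (M + 1), (-1 : R) ^ (j + 1) * (((M + 1).choose (j + 1) : ℕ) : R)
            * (((j:ℕ) : R) + 1) ^ (d + 1) =
            -((M + 1 : R)) * ((-1 : R) ^ j * (M.choose j : R) * ((j : R) + 1) ^ d) := by
          intro j _
          rw [pow_succ ((j : R) + 1) d]
          calc (-1 : R) ^ (j + 1) * (((M + 1).choose (j + 1) : ℕ) : R) * (((j:R)+1) ^ d * ((j:R)+1))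
              = (-1 : R) ^ (j + 1) * ((((M + 1).choose (j + 1) : ℕ) : R) * ((j:R)+1)) * ((j:R)+1) ^ d := by
                ring
            _ = (-1 : R) ^ (j + 1) * ((M + 1 : R) * (M.choose j : R)) * ((j:R)+1) ^ d := by rw [key]
            _ = -((M + 1 : R)) * ((-1 : R) ^ j * (M.choose j : R) * ((j : R) + 1) ^ d) := by
                rw [pow_succ]; ring
        rw [Finset.sum_congr rfl (fun j hj => by push_cast; exact step j hj)]
        rw [← Finset.mul_sum]
        have inner : ∑ j ∈ range (M + 1), (-1 : R) ^ j * (M.choose j : R) * ((j : R) + 1) ^ d = 0 := by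
          have expand : ∀ j : ℕ, ((j : R) + 1) ^ d = ∑ e ∈ range (d + 1), (d.choose e : R) * (j : R) ^ e := by
            intro j
            rw [add_pow]
            exact Finset.sum_congr rfl fun e he => by simp [mul_comm]
          calc ∑ j ∈ range (M + 1), (-1 : R) ^ j * (M.choose j : R) * ((j : R) + 1) ^ d
              = ∑ j ∈ range (M + 1), ∑ e ∈ range (d + 1),
                  (d.choose e : R) * ((-1 : R) ^ j * (M.choose j : R) * (j : R) ^ e) := by
                refine Finset.sum_congr rfl fun j _ => ?_
                rw [expand j, Finset.mul_sum]
                exact Finset.sum_congr rfl fun e _ => by ring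
            _ = ∑ e ∈ range (d + 1), (d.choose e : R) *
                  ∑ j ∈ range (M + 1), (-1 : R) ^ j * (M.choose j : R) * (j : R) ^ e := by
                rw [Finset.sum_comm]
                exact Finset.sum_congr rfl fun e _ => by rw [Finset.mul_sum]
            _ = 0 := by
                refine Finset.sum_eq_zero fun e he => ?_
                rw [ih e (by simpa using he) M (by simp at he; omega), mul_zero]
        rw [inner]
        ring

lemma alt_poly {R : Type*} [CommRing R] (N : ℕ) (p : R[X]) (h : p.natDegree < N) :
    ∑ j ∈ range (N + 1), (-1 : R) ^ j * (N.choose j : R) * p.eval (j : R) = 0 := by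
  calc ∑ j ∈ range (N + 1), (-1 : R) ^ j * (N.choose j : R) * p.eval (j : R)
      = ∑ j ∈ range (N + 1), ∑ d ∈ range (p.natDegree + 1),
          p.coeff d * ((-1 : R) ^ j * (N.choose j : R) * (j : R) ^ d) := by
        refine Finset.sum_congr rfl fun j _ => ?_
        rw [Polynomial.eval_eq_sum_range, Finset.mul_sum]
        exact Finset.sum_congr rfl fun d _ => by ring
    _ = ∑ d ∈ range (p.natDegree + 1), p.coeff d *
          ∑ j ∈ range (N + 1), (-1 : R) ^ j * (N.choose j : R) * (j : R) ^ d := by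
        rw [Finset.sum_comm]
        exact Finset.sum_congr rfl fun d _ => by rw [Finset.mul_sum]
    _ = 0 := Finset.sum_eq_zero fun d hd => by
        rw [mono_alt d N (by simp at hd; omega), mul_zero]

noncomputable def pr (f : ℕ → ℚ) (c : ℕ) : ℚ[X] :=
  ∏ t ∈ range c, (1 + Polynomial.C (f t) * Polynomial.X)

lemma coeff_pr (f : ℕ → ℚ) (c i : ℕ) :
    (pr f c).coeff i = ∑ s ∈ Finset.powersetCard i (range c), ∏ n ∈ s, f n := by
  induction c generalizing i with
  | zero =>
      rcases i with _ | i
      · simp [pr, Finset.powersetCard_zero]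
      · have : Finset.powersetCard (i + 1) (∅ : Finset ℕ) = ∅ := by
          rw [Finset.powersetCard_eq_empty]
          simp
        simp [pr, this, Polynomial.coeff_one]
  | succ c ih =>
      rw [pr, Finset.prod_range_succ, ← pr]
      match i with
      | 0 =>
          rw [Polynomial.mul_coeff_zero, ih 0]
          simp
      | i + 1 =>
          have hmul : (pr f c * (1 + Polynomial.C (f c) * Polynomial.X)).coeff (i + 1) =
              (pr f c).coeff (i + 1) + f c * (pr f c).coeff i := by
            rw [mul_add, mul_one, Polynomial.coeff_add]
            congr 1
            rw [show pr f c * (Polynomial.C (f c) * Polynomial.X)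
                = Polynomial.C (f c) * (pr f c * Polynomial.X) by ring,
              Polynomial.coeff_C_mul, Polynomial.coeff_mul_X]
          rw [hmul, ih (i + 1), ih i]
          rw [Finset.range_add_one, Finset.powersetCard_succ_insert (by simp)]
          rw [Finset.sum_union, Finset.sum_image]
          · congr 1
            rw [Finset.mul_sum]
            refine Finset.sum_congr rfl fun s hs => ?_
            rw [Finset.prod_insert]
            intro hc
            exact absurd ((Finset.mem_powersetCard.mp hs).1 hc) (by simp)
          · intro s hs t ht hst
            have hcs : c ∉ s := fun hc => absurd ((Finset.mem_powersetCard.mp hs).1 hc) (by simp)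
            have hct : c ∉ t := fun hc => absurd ((Finset.mem_powersetCard.mp ht).1 hc) (by simp)
            have := congrArg (Finset.erase · c) hst
            simpa [Finset.erase_insert, hcs, hct] using this
          · rw [Finset.disjoint_right]
            intro s hs hs'
            simp only [Finset.mem_image] at hs
            obtain ⟨t, ht, rfl⟩ := hs
            have : c ∉ insert c t → False := by simp
            exact this fun hc => absurd ((Finset.mem_powersetCard.mp hs').1 (Finset.mem_insert_self c t)) (by simp)

lemma coeff_mul_range (A B : ℚ[X]) (i : ℕ) :
    (A * B).coeff i = ∑ ℓ ∈ range (i + 1), A.coeff (i - ℓ) * B.coeff ℓ := by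
  rw [mul_comm, Polynomial.coeff_mul, Finset.Nat.sum_antidiagonal_eq_sum_range_succ_mk]
  exact Finset.sum_congr rfl fun ℓ _ => mul_comm _ _


lemma coeff_pr_neg (f : ℕ → ℚ) (c ℓ : ℕ) :
    (pr (fun t => -f t) c).coeff ℓ = (-1 : ℚ) ^ ℓ * (pr f c).coeff ℓ := by
  rw [coeff_pr, coeff_pr, Finset.mul_sum]
  refine Finset.sum_congr rfl fun s hs => ?_
  have hcard : s.card = ℓ := (Finset.mem_powersetCard.mp hs).2
  calc ∏ n ∈ s, -f n = ∏ n ∈ s, ((-1 : ℚ) * f n) := by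
        exact Finset.prod_congr rfl fun n _ => by ring
    _ = (∏ _n ∈ s, (-1 : ℚ)) * ∏ n ∈ s, f n := by rw [Finset.prod_mul_distrib]
    _ = (-1 : ℚ) ^ ℓ * ∏ n ∈ s, f n := by rw [Finset.prod_const, hcard]

def fOdd : ℕ → ℚ := fun t => (2 * (t : ℚ) + 1) / 2
def fOddN : ℕ → ℚ := fun t => -((2 * (t : ℚ) + 1) / 2)
def fEv : ℕ → ℚ := fun t => (t : ℚ) + 1
def fEvN : ℕ → ℚ := fun t => -((t : ℚ) + 1)

lemma Dint_eq (i k : ℕ) : Dint i k = (1 / 2) * (pr fOdd ((k - 2) / 2)).coeff i := by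
  rw [Dint, eOdd, coeff_pr, Finset.mul_sum, Finset.mul_sum]
  refine Finset.sum_congr rfl fun s hs => ?_
  have hcard : s.card = i := (Finset.mem_powersetCard.mp hs).2
  have h : ∏ n ∈ s, fOdd n = (1 / 2 : ℚ) ^ i * ∏ n ∈ s, (2 * (n : ℚ) + 1) := by
    rw [← hcard, ← Finset.prod_const, ← Finset.prod_mul_distrib]
    exact Finset.prod_congr rfl fun n _ => by rw [fOdd]; ring
  rw [h, pow_succ]
  ring

lemma dint_eq (i k : ℕ) : dint i k = (1 / 2) * (pr fEv ((k - 2) / 2)).coeff i := by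
  rw [dint, eEven, coeff_pr, Finset.mul_sum, Finset.mul_sum]
  refine Finset.sum_congr rfl fun s hs => ?_
  have hcard : s.card = i := (Finset.mem_powersetCard.mp hs).2
  have h : ∏ n ∈ s, fEv n = (1 / 2 : ℚ) ^ i * ∏ n ∈ s, (2 * ((n : ℚ) + 1)) := by
    rw [← hcard, ← Finset.prod_const, ← Finset.prod_mul_distrib]
    exact Finset.prod_congr rfl fun n _ => by rw [fEv]; ring
  rw [h, pow_succ]
  ring

noncomputable def Wp (m j : ℕ) : ℚ[X] :=
  ∏ t ∈ range m, (1 + Polynomial.C ((2 * (t : ℚ) + 1 - (j : ℚ)) / 2) * Polynomial.X)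

lemma Weven (b c : ℕ) : Wp (b + c) (2 * b) = pr fOdd c * pr fOddN b := by
  rw [Wp, Finset.prod_range_add, mul_comm]
  congr 1
  · rw [pr]
    refine Finset.prod_congr rfl fun s _ => ?_
    have harg : (2 * ((b + s : ℕ) : ℚ) + 1 - ((2 * b : ℕ) : ℚ)) / 2 = fOdd s := by
      rw [fOdd]; push_cast; ring
    rw [harg]
  · rw [pr, ← Finset.prod_range_reflect]
    refine Finset.prod_congr rfl fun t ht => ?_
    have ht' : t < b := Finset.mem_range.mp ht
    have hcast : ((b - 1 - t : ℕ) : ℚ) = (b : ℚ) - 1 - (t : ℚ) := by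
      have h1 : b - 1 - t = b - (1 + t) := by omega
      rw [h1, Nat.cast_sub (by omega)]
      push_cast; ring
    have harg : (2 * ((b - 1 - t : ℕ) : ℚ) + 1 - ((2 * b : ℕ) : ℚ)) / 2 = fOddN t := by
      rw [fOddN, hcast]; push_cast; ring
    rw [harg]

lemma Wodd (a c : ℕ) : Wp (a + 1 + c) (2 * a + 1) = pr fEv c * pr fEvN a := by
  rw [Wp, Finset.prod_range_add, mul_comm]
  congr 1
  · rw [pr]
    refine Finset.prod_congr rfl fun s _ => ?_
    have harg : (2 * ((a + 1 + s : ℕ) : ℚ) + 1 - ((2 * a + 1 : ℕ) : ℚ)) / 2 = fEv s := by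
      rw [fEv]; push_cast; ring
    rw [harg]
  · rw [pr, ← Finset.prod_range_reflect, Finset.prod_range_succ']
    have h0 : (1 + Polynomial.C ((2 * ((a + 1 - 1 - 0 : ℕ) : ℚ) + 1 - ((2 * a + 1 : ℕ) : ℚ)) / 2)
        * Polynomial.X) = 1 := by
      have h1 : (a + 1 - 1 - 0 : ℕ) = a := by omega
      rw [h1]
      have h2 : (2 * (a : ℚ) + 1 - ((2 * a + 1 : ℕ) : ℚ)) / 2 = 0 := by push_cast; ring
      rw [h2]
      simp
    rw [h0, mul_one]
    refine Finset.prod_congr rfl fun t ht => ?_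
    have ht' : t < a := Finset.mem_range.mp ht
    have hcast : ((a + 1 - 1 - (t + 1) : ℕ) : ℚ) = (a : ℚ) - 1 - (t : ℚ) := by
      have h1 : a + 1 - 1 - (t + 1) = a - (1 + t) := by omega
      rw [h1, Nat.cast_sub (by omega)]
      push_cast; ring
    have harg : (2 * ((a + 1 - 1 - (t + 1) : ℕ) : ℚ) + 1 - ((2 * a + 1 : ℕ) : ℚ)) / 2 = fEvN t := by
      rw [fEvN, hcast]; push_cast; ring
    rw [harg]

noncomputable def G (m : ℕ) : Polynomial (ℚ[X]) :=
  ∏ t ∈ range m, (Polynomial.C (1 + Polynomial.C ((2 * (t : ℚ) + 1) / 2) * Polynomial.X)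
    - Polynomial.C (Polynomial.C ((1 : ℚ) / 2) * Polynomial.X) * Polynomial.X)

lemma G_eval (m j : ℕ) : (G m).eval ((j : ℕ) : ℚ[X]) = Wp m j := by
  rw [G, Polynomial.eval_prod, Wp]
  refine Finset.prod_congr rfl fun t _ => ?_
  rw [Polynomial.eval_sub, Polynomial.eval_C, Polynomial.eval_mul, Polynomial.eval_C,
    Polynomial.eval_X]
  have hj : ((j : ℕ) : ℚ[X]) = Polynomial.C ((j : ℕ) : ℚ) := by
    rw [Polynomial.C_eq_natCast]
  rw [hj]
  have harg : ((2 * (t : ℚ) + 1 - (j : ℚ)) / 2) = (2 * (t : ℚ) + 1) / 2 - (1 / 2) * (j : ℚ) := by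
    ring
  rw [harg, Polynomial.C_sub, Polynomial.C_mul]
  ring

lemma G_natDegree (m : ℕ) : (G m).natDegree ≤ m := by
  refine le_trans (Polynomial.natDegree_prod_le _ _) ?_
  have : ∀ t ∈ range m, (Polynomial.C (1 + Polynomial.C ((2 * (t : ℚ) + 1) / 2) * Polynomial.X)
      - Polynomial.C (Polynomial.C ((1 : ℚ) / 2) * Polynomial.X) * Polynomial.X).natDegree ≤ 1 := by
    intro t _
    refine le_trans (Polynomial.natDegree_sub_le _ _) ?_
    rw [max_le_iff]
    constructor
    · rw [Polynomial.natDegree_C]; omega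
    · refine le_trans (Polynomial.natDegree_C_mul_le _ _) ?_
      simp
  refine le_trans (Finset.sum_le_sum this) ?_
  simp

lemma Smaster (m : ℕ) (hm : 2 ≤ m) :
    ∑ j ∈ range (2 * m), (-1 : ℚ[X]) ^ j * ((2 * m - 1).choose j : ℚ[X]) * Wp m j = 0 := by
  rw [show range (2 * m) = range ((2 * m - 1) + 1) by congr 1; omega]
  have := alt_poly (2 * m - 1) (G m) (lt_of_le_of_lt (G_natDegree m) (by omega))
  rw [← this]
  exact Finset.sum_congr rfl fun j _ => by rw [G_eval]

lemma keyC (m : ℕ) (hm : 2 ≤ m) (i : ℕ) :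
    ∑ b ∈ range m, (((2 * m - 1).choose (2 * b) : ℚ)) * (Wp m (2 * b)).coeff i =
    ∑ a ∈ range m, (((2 * m - 1).choose (2 * a + 1) : ℚ)) * (Wp m (2 * a + 1)).coeff i := by
  have hS := Smaster m hm
  rw [sum_range_two_mul] at hS
  have hterm : ∀ b : ℕ,
      ((-1 : ℚ[X]) ^ (2 * b) * ((2 * m - 1).choose (2 * b) : ℚ[X]) * Wp m (2 * b) +
       (-1 : ℚ[X]) ^ (2 * b + 1) * ((2 * m - 1).choose (2 * b + 1) : ℚ[X]) * Wp m (2 * b + 1)) =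
      (((2 * m - 1).choose (2 * b) : ℚ[X]) * Wp m (2 * b) -
       ((2 * m - 1).choose (2 * b + 1) : ℚ[X]) * Wp m (2 * b + 1)) := by
    intro b
    have h1 : (-1 : ℚ[X]) ^ (2 * b) = 1 := by
      rw [pow_mul]; norm_num
    rw [pow_succ, h1]
    ring
  rw [Finset.sum_congr rfl fun b _ => hterm b, Finset.sum_sub_distrib, sub_eq_zero] at hS
  have := congrArg (fun p : ℚ[X] => p.coeff i) hS
  simp only [Polynomial.finset_sum_coeff] at this
  calc ∑ b ∈ range m, (((2 * m - 1).choose (2 * b) : ℚ)) * (Wp m (2 * b)).coeff i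
      = ∑ b ∈ range m, ((((2 * m - 1).choose (2 * b) : ℚ[X])) * Wp m (2 * b)).coeff i := by
        refine Finset.sum_congr rfl fun b _ => ?_
        rw [← Polynomial.C_eq_natCast, Polynomial.coeff_C_mul]
    _ = ∑ a ∈ range m, ((((2 * m - 1).choose (2 * a + 1) : ℚ[X])) * Wp m (2 * a + 1)).coeff i :=
        this
    _ = ∑ a ∈ range m, (((2 * m - 1).choose (2 * a + 1) : ℚ)) * (Wp m (2 * a + 1)).coeff i := by
        refine Finset.sum_congr rfl fun a _ => ?_
        rw [← Polynomial.C_eq_natCast, Polynomial.coeff_C_mul]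

lemma filter_odd_sum {M : Type*} [AddCommMonoid M] (m : ℕ) (F : ℕ → M) :
    ∑ j ∈ (range (2 * m)).filter (fun j => Odd j), F j = ∑ a ∈ range m, F (2 * a + 1) := by
  rw [Finset.sum_filter, sum_range_two_mul]
  refine Finset.sum_congr rfl fun b _ => ?_
  have h1 : ¬ Odd (2 * b) := by rw [Nat.odd_iff]; omega
  have h2 : Odd (2 * b + 1) := by rw [Nat.odd_iff]; omega
  rw [if_neg h1, if_pos h2, zero_add]

lemma filter_even_sum {M : Type*} [AddCommMonoid M] (m : ℕ) (hm : 1 ≤ m) (F : ℕ → M) :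
    ∑ j ∈ (range (2 * m)).filter (fun j => Even j ∧ j ≠ 0), F j =
    ∑ b ∈ range (m - 1), F (2 * b + 2) := by
  rw [Finset.sum_filter, sum_range_two_mul]
  have hstep : ∀ b : ℕ,
      ((if Even (2 * b) ∧ 2 * b ≠ 0 then F (2 * b) else 0) +
        (if Even (2 * b + 1) ∧ 2 * b + 1 ≠ 0 then F (2 * b + 1) else 0)) =
      (if b = 0 then 0 else F (2 * b)) := by
    intro b
    have h2 : ¬ (Even (2 * b + 1) ∧ 2 * b + 1 ≠ 0) := by
      rintro ⟨h, -⟩; rw [Nat.even_iff] at h; omega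
    rw [if_neg h2, add_zero]
    rcases Nat.eq_zero_or_pos b with rfl | hb
    · rw [if_neg (by simp), if_pos rfl]
    · rw [if_pos ⟨⟨b, by ring⟩, by omega⟩, if_neg (by omega)]
  rw [Finset.sum_congr rfl fun b _ => hstep b]
  rw [show m = (m - 1) + 1 by omega, Finset.sum_range_succ']
  rw [if_pos rfl, add_zero]
  refine Finset.sum_congr rfl fun b _ => ?_
  rw [if_neg (by omega)]
  congr 1

lemma Dint2 (i c : ℕ) : Dint i (2 * c + 2) = (1 / 2) * (pr fOdd c).coeff i := by
  rw [Dint_eq, show (2 * c + 2 - 2) / 2 = c by omega]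

lemma dint2 (i c : ℕ) : dint i (2 * c + 2) = (1 / 2) * (pr fEv c).coeff i := by
  rw [dint_eq, show (2 * c + 2 - 2) / 2 = c by omega]

lemma inner_odd (m a i : ℕ) (ha : a < m) :
    ∑ ℓ ∈ range (i + 1), (-1 : ℚ) ^ ℓ * dint (i - ℓ) (2 * m + 2 - 1 - (2 * a + 1)) *
      dint ℓ (2 * a + 1 + 1) = (1 / 4) * (Wp m (2 * a + 1)).coeff i := by
  have h1 : 2 * m + 2 - 1 - (2 * a + 1) = 2 * (m - 1 - a) + 2 := by omega
  have h2 : 2 * a + 1 + 1 = 2 * a + 2 := rfl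
  rw [h1, h2]
  have hstep : ∀ ℓ, (-1 : ℚ) ^ ℓ * dint (i - ℓ) (2 * (m - 1 - a) + 2) * dint ℓ (2 * a + 2) =
      (1 / 4) * ((pr fEv (m - 1 - a)).coeff (i - ℓ) * (pr fEvN a).coeff ℓ) := by
    intro ℓ
    rw [dint2, dint2]
    have : (pr fEvN a).coeff ℓ = (-1 : ℚ) ^ ℓ * (pr fEv a).coeff ℓ := by
      have h := coeff_pr_neg fEv a ℓ
      rw [show (fun t => -fEv t) = fEvN from rfl] at h
      exact h
    rw [this]
    ring
  rw [Finset.sum_congr rfl fun ℓ _ => hstep ℓ, ← Finset.mul_sum, ← coeff_mul_range]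
  rw [show Wp m (2 * a + 1) = Wp (a + 1 + (m - 1 - a)) (2 * a + 1) by congr 1; omega,
    Wodd a (m - 1 - a)]

lemma inner_even (m b i : ℕ) (hb : b + 1 < m) :
    ∑ ℓ ∈ range (i + 1), (-1 : ℚ) ^ ℓ * Dint (i - ℓ) (2 * m + 2 - (2 * b + 2)) *
      Dint ℓ (2 * b + 2 + 2) = (1 / 4) * (Wp m (2 * b + 2)).coeff i := by
  have h1 : 2 * m + 2 - (2 * b + 2) = 2 * (m - b - 1) + 2 := by omega
  have h2 : 2 * b + 2 + 2 = 2 * (b + 1) + 2 := by ring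
  rw [h1, h2]
  have hstep : ∀ ℓ, (-1 : ℚ) ^ ℓ * Dint (i - ℓ) (2 * (m - b - 1) + 2) * Dint ℓ (2 * (b + 1) + 2) =
      (1 / 4) * ((pr fOdd (m - b - 1)).coeff (i - ℓ) * (pr fOddN (b + 1)).coeff ℓ) := by
    intro ℓ
    rw [Dint2, Dint2]
    have : (pr fOddN (b + 1)).coeff ℓ = (-1 : ℚ) ^ ℓ * (pr fOdd (b + 1)).coeff ℓ := by
      have h := coeff_pr_neg fOdd (b + 1) ℓ
      rw [show (fun t => -fOdd t) = fOddN from rfl] at h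
      exact h
    rw [this]
    ring
  rw [Finset.sum_congr rfl fun ℓ _ => hstep ℓ, ← Finset.mul_sum, ← coeff_mul_range]
  rw [show Wp m (2 * b + 2) = Wp ((b + 1) + (m - b - 1)) (2 * (b + 1)) by
    congr 1 <;> omega]
  rw [Weven (b + 1) (m - b - 1)]

theorem first_recursion (k : ℕ) (hk : Even k) (hk6 : 6 ≤ k) (i : ℕ) (hi : 1 ≤ i)
    (hik : i ≤ k - 3) :
    Dint i k =
      2 * (∑ j ∈ (Finset.range (k - 2)).filter (fun j => Odd j),
        (Nat.choose (k - 3) j : ℚ) *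
          ∑ ℓ ∈ Finset.range (i + 1),
            (-1 : ℚ) ^ ℓ * dint (i - ℓ) (k - 1 - j) * dint ℓ (j + 1)) -
      2 * (∑ j ∈ (Finset.range (k - 2)).filter (fun j => Even j ∧ j ≠ 0),
        (Nat.choose (k - 3) j : ℚ) *
          ∑ ℓ ∈ Finset.range (i + 1),
            (-1 : ℚ) ^ ℓ * Dint (i - ℓ) (k - j) * Dint ℓ (j + 2)) := by
  obtain ⟨m, rfl⟩ : ∃ m, k = 2 * m + 2 := by
    obtain ⟨r, hr⟩ := hk
    exact ⟨r - 1, by omega⟩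
  have hm : 2 ≤ m := by omega
  rw [show 2 * m + 2 - 2 = 2 * m by omega, show 2 * m + 2 - 3 = 2 * m - 1 by omega]
  rw [filter_odd_sum m, filter_even_sum m (by omega)]
  have hA : ∑ a ∈ range m, ((2 * m - 1).choose (2 * a + 1) : ℚ) *
      ∑ ℓ ∈ range (i + 1), (-1 : ℚ) ^ ℓ * dint (i - ℓ) (2 * m + 2 - 1 - (2 * a + 1)) *
        dint ℓ (2 * a + 1 + 1) =
      (1 / 4) * ∑ a ∈ range m, ((2 * m - 1).choose (2 * a + 1) : ℚ) *
        (Wp m (2 * a + 1)).coeff i := by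
    rw [Finset.mul_sum]
    refine Finset.sum_congr rfl fun a ha => ?_
    rw [inner_odd m a i (Finset.mem_range.mp ha)]
    ring
  have hB : ∑ b ∈ range (m - 1), ((2 * m - 1).choose (2 * b + 2) : ℚ) *
      ∑ ℓ ∈ range (i + 1), (-1 : ℚ) ^ ℓ * Dint (i - ℓ) (2 * m + 2 - (2 * b + 2)) *
        Dint ℓ (2 * b + 2 + 2) =
      (1 / 4) * ∑ b ∈ range (m - 1), ((2 * m - 1).choose (2 * b + 2) : ℚ) *
        (Wp m (2 * b + 2)).coeff i := by
    rw [Finset.mul_sum]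
    refine Finset.sum_congr rfl fun b hb => ?_
    rw [inner_even m b i (by have := Finset.mem_range.mp hb; omega)]
    ring
  rw [hA, hB, Dint2]
  have hkey := keyC m hm i
  have hW0 : Wp m 0 = pr fOdd m := by
    have h := Weven 0 m
    rw [show 0 + m = m by omega] at h
    simpa [pr] using h
  have hpeel : ∑ b ∈ range m, ((2 * m - 1).choose (2 * b) : ℚ) * (Wp m (2 * b)).coeff i =
      (pr fOdd m).coeff i + ∑ b ∈ range (m - 1), ((2 * m - 1).choose (2 * b + 2) : ℚ) *
        (Wp m (2 * b + 2)).coeff i := by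
    rw [show range m = range ((m - 1) + 1) by congr 1; omega, Finset.sum_range_succ']
    rw [show 2 * 0 = 0 by ring, Nat.choose_zero_right, hW0, Nat.cast_one, one_mul, add_comm]
    refine congrArg₂ (· + ·) rfl ?_
    refine Finset.sum_congr rfl fun b _ => ?_
    rw [show 2 * (b + 1) = 2 * b + 2 by ring]
  rw [hpeel] at hkey
  linarith [hkey]
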